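/- Let C be a locally cartesian closed category and g : Y → X a morphism. Then the pullback functor g^* : C/X → C/Y is cartesian closed: for all p, q ∈ C/X there is a natural isomorphism g^*(p^q) ≅ (g^* p)^{(g^* q)} of exponential objects in C/Y. -/

import Mathlib

open CategoryTheory CategoryTheory.Limits

universe v u

section Aux

open CartesianMonoidalCategory MonoidalCategory

/-- The underlying square of a chosen binary product in an over category is a pullback. -/
lemma overProd_isPullback {C : Type u} [Category.{v} C] {S : C}
    [CartesianMonoidalCategory (Over S)] (A B : Over S) :
    IsPullback (fst A B).left (snd A B).left A.hom B.hom := by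
  have comm : (fst A B).left ≫ A.hom = (snd A B).left ≫ B.hom := by
    rw [Over.w, Over.w]
  refine IsPullback.of_isLimit (c := PullbackCone.mk _ _ comm) ?_
  refine PullbackCone.IsLimit.mk comm (fun s =>
    (CartesianMonoidalCategory.lift
      (Over.homMk s.fst rfl : Over.mk (show s.pt ⟶ S from s.fst ≫ A.hom) ⟶ A)
      (Over.homMk s.snd s.condition.symm)).left)
    (fun s => ?_) (fun s => ?_) (fun s m h1 h2 => ?_)
  · exact congrArg CommaMorphism.left (CartesianMonoidalCategory.lift_fst
      (Over.homMk s.fst rfl : Over.mk (show s.pt ⟶ S from s.fst ≫ A.hom) ⟶ A)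
      (Over.homMk s.snd s.condition.symm))
  · exact congrArg CommaMorphism.left (CartesianMonoidalCategory.lift_snd
      (Over.homMk s.fst rfl : Over.mk (show s.pt ⟶ S from s.fst ≫ A.hom) ⟶ A)
      (Over.homMk s.snd s.condition.symm))
  · show m = _
    have mh : m ≫ (A ⊗ B).hom = (show s.pt ⟶ S from s.fst ≫ A.hom) := by
      rw [← Over.w (fst A B), ← Category.assoc]
      erw [h1]
    have key : (Over.homMk m mh : Over.mk (show s.pt ⟶ S from s.fst ≫ A.hom) ⟶ A ⊗ B) =
        CartesianMonoidalCategory.lift (Over.homMk s.fst rfl)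
          (Over.homMk s.snd s.condition.symm) := by
      apply CartesianMonoidalCategory.hom_ext
      · rw [lift_fst]
        apply Over.OverMorphism.ext
        rw [Over.comp_left]
        exact h1
      · rw [lift_snd]
        apply Over.OverMorphism.ext
        rw [Over.comp_left]
        exact h2
    exact congrArg CommaMorphism.left key

end Aux

/-- In a locally cartesian closed category (each slice cartesian closed, each
pullback functor having a right adjoint), the pullback functor `g^* : C/X ⥤ C/Y`
is cartesian closed: `g^*((−)^q) ≅ (g^*(−))^{g^* q}` naturally, so in particular
`g^*(p^q) ≅ (g^* p)^{g^* q}` for all `p q : C/X`. -/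
theorem stmt8 {C : Type u} [Category.{v} C] [HasFiniteWidePullbacks C]
    {X Y : C} (g : Y ⟶ X)
    [CartesianMonoidalCategory (Over X)] [CartesianMonoidalCategory (Over Y)]
    [MonoidalClosed (Over X)] [MonoidalClosed (Over Y)]
    (hPi : ∀ ⦃A B : C⦄ (f : A ⟶ B), (Over.pullback f).IsLeftAdjoint)
    (q : Over X) :
    Nonempty ((ihom q ⋙ Over.pullback g) ≅
      (Over.pullback g ⋙ ihom ((Over.pullback g).obj q))) := by
  classical
  have : HasPullbacks C := inferInstance
  let F : Over X ⥤ Over Y := Over.pullback g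
  let L : Over Y ⥤ Over X := Over.map g
  let h : L ⊣ F := Over.mapPullbackAdj g
  haveI : PreservesLimitsOfSize.{v, v} F := h.rightAdjoint_preservesLimits
  haveI : IsIso (frobeniusMorphism F h q) := by
    suffices hh : ∀ (B : Over Y), IsIso ((frobeniusMorphism F h q).natTrans.app B) from
      NatIso.isIso_of_isIso_app _
    intro B
    set φ := (frobeniusMorphism F h q).natTrans.app B with hφ
    open CartesianMonoidalCategory in
    have hfst : φ ≫ fst q (L.obj B) = L.map (fst (F.obj q) B) ≫ h.counit.app q := by
      simp [hφ, frobeniusMorphism, CartesianMonoidalCategory.prodComparison_fst]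
    open CartesianMonoidalCategory in
    have hsnd : φ ≫ snd q (L.obj B) = L.map (snd (F.obj q) B) := by
      simp [hφ, frobeniusMorphism, CartesianMonoidalCategory.prodComparison_snd]
    open CartesianMonoidalCategory in
    -- the source square, pasted with the defining pullback of `F.obj q`
    have pb1 : IsPullback (fst (F.obj q) B).left (snd (F.obj q) B).left
        (pullback.snd q.hom g) B.hom := overProd_isPullback (F.obj q) B
    have pb2 : IsPullback (pullback.fst q.hom g) (pullback.snd q.hom g) q.hom g :=
      IsPullback.of_hasPullback q.hom g
    open CartesianMonoidalCategory in
    have pbSrc : IsPullback ((fst (F.obj q) B).left ≫ pullback.fst q.hom g)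
        (snd (F.obj q) B).left q.hom (B.hom ≫ g) := pb1.paste_horiz pb2
    open CartesianMonoidalCategory in
    have pbTgt : IsPullback (fst q (L.obj B)).left (snd q (L.obj B)).left
        q.hom (B.hom ≫ g) := overProd_isPullback q (L.obj B)
    open CartesianMonoidalCategory in
    have e1 : (pbSrc.isoIsPullback q.left B.left pbTgt).hom ≫ (fst q (L.obj B)).left =
        (fst (F.obj q) B).left ≫ pullback.fst q.hom g :=
      IsPullback.isoIsPullback_hom_fst q.left B.left pbSrc pbTgt
    open CartesianMonoidalCategory in
    have e2 : (pbSrc.isoIsPullback q.left B.left pbTgt).hom ≫ (snd q (L.obj B)).left =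
        (snd (F.obj q) B).left :=
      IsPullback.isoIsPullback_hom_snd q.left B.left pbSrc pbTgt
    have key : φ.left = (pbSrc.isoIsPullback q.left B.left pbTgt).hom := by
      apply pbTgt.hom_ext
      · rw [e1]
        have := congrArg CommaMorphism.left hfst
        simpa [F, L, h] using this
      · rw [e2]
        have := congrArg CommaMorphism.left hsnd
        simpa [F, L, h] using this
    have : IsIso φ.left := by rw [key]; infer_instance
    haveI : IsIso ((Over.forget X).map φ) := this
    exact isIso_of_reflects_iso φ (Over.forget X)
  haveI : IsIso (expComparison F q).natTrans := expComparison_iso_of_frobeniusMorphism_iso F h q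
  exact ⟨asIso (expComparison F q).natTrans⟩
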